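/- The difference between the quantum and classical average payoffs of the binary RAC for n = 2 equals (1/(T_YES + d - 1))·((T_YES+1)(√d - 1))/(2d), and this is strictly positive for all integers d ≥ 2 and T_YES > 0. -/
import Mathlib


/-- The difference between the quantum and classical average payoffs of the binary RAC
for `n = 2` equals `(T_YES+1)(√d - 1)/(2d(T_YES+d-1))` and is strictly positive. -/
theorem stmt_14 (d : ℕ) (hd : 2 ≤ d) (TYES : ℝ) (hT : 0 < TYES) :
    (TYES + 1 + Real.sqrt d * (2 * (d : ℝ) + TYES - 3)) / (2 * Real.sqrt d * (TYES + (d : ℝ) - 1))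
        - (TYES + 1 + (d : ℝ) * (2 * (d : ℝ) + TYES - 3)) / (2 * (d : ℝ) * (TYES + (d : ℝ) - 1))
      = (TYES + 1) * (Real.sqrt d - 1) / (2 * (d : ℝ) * (TYES + (d : ℝ) - 1)) ∧
    0 < (TYES + 1) * (Real.sqrt d - 1) / (2 * (d : ℝ) * (TYES + (d : ℝ) - 1)) := by
  have hd2 : (2 : ℝ) ≤ (d : ℝ) := by exact_mod_cast hd
  have hdpos : (0 : ℝ) < d := by linarith
  set s := Real.sqrt d with hsdef
  have hs : s * s = d := Real.mul_self_sqrt hdpos.le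
  have hs1 : 1 < s := by nlinarith [Real.sqrt_nonneg (d : ℝ)]
  have hspos : (0 : ℝ) < s := by linarith
  have hden : (0 : ℝ) < TYES + (d : ℝ) - 1 := by linarith
  constructor
  · have h1 : s ≠ 0 := ne_of_gt hspos
    have h2 : TYES + s * s - 1 ≠ 0 := by rw [hs]; exact ne_of_gt hden
    rw [← hs]
    field_simp
    ring
  · apply div_pos (by nlinarith) (by positivity)
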